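/- Assume conditions (C.1) and (C.2) hold, (d_t)_{t∈I} is complete, Ψ is sequentially continuous, and x_0 ∈ X satisfies Σ_{n=1}^∞ (∫_{I(t)} R_{λ^p,μ,n}(t,s) Λ(s,x_0,Ψ(x_0))^p μ(ds))^{1/p} < ∞ for all t ∈ I. Then the Picard sequence (x_n)_{n∈ℕ} defined recursively by x_n := Ψ(x_{n−1}) converges to a fixed point x̂ of Ψ (that is, Ψ(x̂) = x̂ and lim_{n→∞} d_t(x_n,x̂) = 0 for all t ∈ I), and d_t(x_n,x̂) ≤ Σ_{i=n}^∞ (∫_{I(t)} R_{λ^p,μ,i}(t,s) Λ(s,x_0,Ψ(x_0))^p μ(ds))^{1/p} for all n ∈ ℕ and t ∈ I. Moreover, if lim_{n→∞} ∫_{I(t)} R_{λ^p,μ,n}(t,s) Λ(s,x,x̃)^p μ(ds) = 0 for all t ∈ I and x, x̃ ∈ Ψ(X), then x̂ is the unique fixed point of Ψ. -/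

import Mathlib

open MeasureTheory ENNReal Filter

/-- The resolvent sequence of a non-negative kernel `k` with respect to a measure `μ`:
`res r μ k 0 = k` corresponds to `R_{k,μ,1}` and
`res r μ k (n+1) t s = ∫_{[s,t]} k t u * res r μ k n u s ∂μ` corresponds to `R_{k,μ,n+2}`. -/
noncomputable def res {I : Type*} [MeasurableSpace I] (r : I → I → Prop)
    (μ : Measure I) (k : I → I → ℝ≥0∞) : ℕ → I → I → ℝ≥0∞
  | 0, t, s => k t s
  | n + 1, t, s => ∫⁻ u in {u : I | r s u ∧ r u t}, k t u * res r μ k n u s ∂μ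

section Aux
variable {I : Type*} [MeasurableSpace I]

noncomputable def Rfull (μ : Measure I) (K : I → I → ℝ≥0∞) : ℕ → I → I → ℝ≥0∞
  | 0 => K
  | n + 1 => fun t s => ∫⁻ u, K t u * Rfull μ K n u s ∂μ

lemma Rfull_meas (μ : Measure I) [SigmaFinite μ] {K : I → I → ℝ≥0∞}
    (hK : Measurable fun q : I × I => K q.1 q.2) :
    ∀ n, Measurable fun q : I × I => Rfull μ K n q.1 q.2
  | 0 => hK
  | n + 1 => by
    have h1 : Measurable fun r : (I × I) × I => K r.1.1 r.2 * Rfull μ K n r.2 r.1.2 :=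
      (hK.comp (measurable_fst.fst.prodMk measurable_snd)).mul
        ((Rfull_meas μ hK n).comp (measurable_snd.prodMk measurable_fst.snd))
    exact h1.lintegral_prod_right'

lemma Rfull_zero [Preorder I] (μ : Measure I) {K : I → I → ℝ≥0∞}
    (hK0 : ∀ t s, ¬ s ≤ t → K t s = 0) :
    ∀ n t s, ¬ s ≤ t → Rfull μ K n t s = 0
  | 0 => hK0
  | n + 1 => fun t s h => by
    have h0 : (fun u => K t u * Rfull μ K n u s) = fun _ => 0 := funext fun u => by
      by_cases hu : u ≤ t
      · rw [Rfull_zero μ hK0 n u s (fun hs => h (hs.trans hu)), mul_zero]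
      · rw [hK0 t u hu, zero_mul]
    show (∫⁻ u, K t u * Rfull μ K n u s ∂μ) = 0
    rw [h0]; simp

lemma Rfull_eq_res [Preorder I] (μ : Measure I) {lamp K : I → I → ℝ≥0∞}
    (hsec : ∀ s t : I, MeasurableSet {u : I | s ≤ u ∧ u ≤ t})
    (hK0 : ∀ t s, ¬ s ≤ t → K t s = 0) (hK1 : ∀ t s, s ≤ t → K t s = lamp t s) :
    ∀ n t s, s ≤ t → Rfull μ K n t s = res (· ≤ ·) μ lamp n t s
  | 0 => fun t s h => hK1 t s h
  | n + 1 => fun t s h => by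
    show (∫⁻ u, K t u * Rfull μ K n u s ∂μ) = _
    have h0 : (fun u => K t u * Rfull μ K n u s)
        = Set.indicator {u : I | s ≤ u ∧ u ≤ t}
            (fun u => lamp t u * res (· ≤ ·) μ lamp n u s) := by
      funext u
      by_cases hu : u ∈ {u : I | s ≤ u ∧ u ≤ t}
      · rw [Set.indicator_of_mem hu, hK1 t u hu.2, Rfull_eq_res μ hsec hK0 hK1 n u s hu.1]
      · rw [Set.indicator_of_notMem hu]
        by_cases hut : u ≤ t
        · rw [Rfull_zero μ hK0 n u s (fun hs => hu (Set.mem_setOf_eq ▸ ⟨hs, hut⟩)), mul_zero]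
        · rw [hK0 t u hut, zero_mul]
    rw [h0, lintegral_indicator (hsec s t)]
    rfl
end Aux

/-- **Fixed point theorem for evolution operators** (Theorem 1 of the paper): under
(C.1) and (C.2), if the family `(d_t)` is complete, `Ψ` is sequentially continuous and
`x₀` satisfies `∑_{n=1}^∞ (∫_{I(t)} R_{λ^p,μ,n}(t,s) Λ(s,x₀,Ψ(x₀))^p μ(ds))^{1/p} < ∞`
for all `t`, then the Picard sequence `x_n = Ψ^[n] x₀` converges to a fixed point `x̂`
of `Ψ` with the error estimate
`d_t(x_n,x̂) ≤ ∑_{i=n}^∞ (∫_{I(t)} R_{λ^p,μ,i}(t,s) Λ(s,x₀,Ψ(x₀))^p μ(ds))^{1/p}`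
for `n ≥ 1`; moreover, if `∫_{I(t)} R_{λ^p,μ,n}(t,s) Λ(s,x,x̃)^p μ(ds) → 0` for all
`t ∈ I` and `x, x̃ ∈ Ψ(X)`, then `x̂` is the unique fixed point
(resolvent indices are shifted by one: `res … n = R_{·,n+1}`). -/
theorem fixed_point_theorem {I X : Type*} [MeasurableSpace I] [Preorder I]
    [Nonempty X]
    (hΔ : MeasurableSet {q : I × I | q.2 ≤ q.1})
    (d : I → X → X → ℝ≥0∞)
    (hd0 : ∀ x y : X, x = y ↔ ∀ t : I, d t x y = 0)
    (hdmeas : ∀ x y : X, Measurable fun t : I => d t x y)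
    (Ψ : X → X)
    (Λ : I → X → X → ℝ≥0∞) (hΛmeas : ∀ x y : X, Measurable fun t : I => Λ t x y)
    (μ : Measure I) [SigmaFinite μ]
    (p : ℝ) (hp : 1 ≤ p)
    (lam : I → I → ℝ≥0∞)
    (hlam : Measurable fun q : {q : I × I // q.2 ≤ q.1} => lam q.1.1 q.1.2)
    (hC1a : ∀ (t : I) (x y : X),
      d t (Ψ x) (Ψ y) ≤ (∫⁻ s in {s : I | s ≤ t}, lam t s ^ p * Λ s x y ^ p ∂μ) ^ (1 / p))
    (hC1b : ∀ (t : I) (x y : X), Λ t x y ≤ d t x y)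
    (hC2refl : ∀ (t : I) (x : X), d t x x = 0)
    (hC2symm : ∀ (t : I) (x y : X), d t x y = d t y x)
    (hC2triangle : ∀ (t : I) (x y z : X), d t x z ≤ d t x y + d t y z)
    (hcomplete : ∀ x : ℕ → X,
      (∀ t : I, Tendsto (fun n : ℕ => ⨆ m ∈ Set.Ici n, d t (x n) (x m)) atTop (nhds 0)) →
      ∃ y : X, ∀ t : I, Tendsto (fun n : ℕ => d t (x n) y) atTop (nhds 0))
    (hseqcont : ∀ (x : ℕ → X) (y : X),
      (∀ t : I, Tendsto (fun n : ℕ => d t (x n) y) atTop (nhds 0)) →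
      ∀ t : I, Tendsto (fun n : ℕ => d t (Ψ (x n)) (Ψ y)) atTop (nhds 0))
    (x₀ : X)
    (hx₀ : ∀ t : I,
      (∑' n : ℕ,
        (∫⁻ s in {s : I | s ≤ t},
          res (· ≤ ·) μ (fun a b => lam a b ^ p) n t s * Λ s x₀ (Ψ x₀) ^ p ∂μ) ^ (1 / p)) < ∞) :
    ∃ xhat : X, Ψ xhat = xhat ∧
      (∀ t : I, Tendsto (fun n : ℕ => d t (Ψ^[n] x₀) xhat) atTop (nhds 0)) ∧
      (∀ (n : ℕ) (t : I),
        d t (Ψ^[n + 1] x₀) xhat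
          ≤ ∑' i : ℕ,
              (∫⁻ s in {s : I | s ≤ t},
                res (· ≤ ·) μ (fun a b => lam a b ^ p) (n + i) t s
                  * Λ s x₀ (Ψ x₀) ^ p ∂μ) ^ (1 / p)) ∧
      ((∀ (t : I) (x y : X),
          Tendsto (fun n : ℕ =>
              ∫⁻ s in {s : I | s ≤ t},
                res (· ≤ ·) μ (fun a b => lam a b ^ p) n t s * Λ s (Ψ x) (Ψ y) ^ p ∂μ)
            atTop (nhds 0)) →
        ∀ y : X, Ψ y = y → y = xhat) := by
  classical
  have hp0 : (0:ℝ) < p := lt_of_lt_of_le one_pos hp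
  have hpne : p ≠ 0 := ne_of_gt hp0
  set lamp : I → I → ℝ≥0∞ := fun a b => lam a b ^ p with hlampdef
  set K : I → I → ℝ≥0∞ := fun t s => if s ≤ t then lamp t s else 0 with hKdef
  have hK0 : ∀ t s : I, ¬ s ≤ t → K t s = 0 := fun t s h => if_neg h
  have hK1 : ∀ t s : I, s ≤ t → K t s = lamp t s := fun t s h => if_pos h
  have hKm : Measurable fun q : I × I => K q.1 q.2 := by
    have he : (fun q : I × I => K q.1 q.2)
        = fun q : I × I => if h : q ∈ {q : I × I | q.2 ≤ q.1}
            then (fun q : {q : I × I // q.2 ≤ q.1} => lam q.1.1 q.1.2 ^ p) ⟨q, h⟩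
            else (fun _ : ({q : I × I | q.2 ≤ q.1}ᶜ : Set (I × I)) => (0:ℝ≥0∞)) ⟨q, h⟩ := by
      funext q
      by_cases h : q.2 ≤ q.1 <;> simp [hKdef, hlampdef, h, Set.mem_setOf_eq]
    rw [he]
    exact Measurable.dite (hlam.pow_const p) measurable_const hΔ
  have hsecL : ∀ t : I, MeasurableSet {s : I | s ≤ t} := fun t => by
    have h := (measurable_prodMk_left (x := t) (β := I)) hΔ
    exact h
  have hsecI : ∀ s t : I, MeasurableSet {u : I | s ≤ u ∧ u ≤ t} := fun s t => by
    have h1 : MeasurableSet {u : I | s ≤ u} := by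
      have h := (measurable_prodMk_right (y := s) (α := I)) hΔ
      exact h
    exact MeasurableSet.inter h1 (hsecL t)
  have hRm := Rfull_meas μ hKm
  have hsetint : ∀ (n : ℕ) (t : I) (f : I → ℝ≥0∞),
      (∫⁻ s, Rfull μ K n t s * f s ∂μ)
        = ∫⁻ s in {s : I | s ≤ t}, res (· ≤ ·) μ lamp n t s * f s ∂μ := by
    intro n t f
    rw [← lintegral_indicator (hsecL t)]
    congr 1; funext s
    by_cases h : s ≤ t
    · rw [Set.indicator_of_mem (show s ∈ {s : I | s ≤ t} from h),
        Rfull_eq_res μ hsecI hK0 hK1 n t s h]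
    · rw [Set.indicator_of_notMem (show s ∉ {s : I | s ≤ t} from h),
        Rfull_zero μ hK0 n t s h, zero_mul]
  have hpowp : ∀ a b : ℝ≥0∞, a ≤ b ^ (1/p) → a ^ p ≤ b := by
    intro a b h
    calc a ^ p ≤ (b ^ (1/p)) ^ p := ENNReal.rpow_le_rpow h hp0.le
    _ = b := by rw [← ENNReal.rpow_mul, one_div_mul_cancel hpne, ENNReal.rpow_one]
  have hΛp : ∀ x y : X, Measurable fun s : I => Λ s x y ^ p := fun x y =>
    (hΛmeas x y).pow_const p
  -- the key inductive estimate
  have keyB : ∀ (n : ℕ) (t : I) (x y : X),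
      d t (Ψ^[n + 1] x) (Ψ^[n + 1] y)
        ≤ (∫⁻ s, Rfull μ K n t s * Λ s x y ^ p ∂μ) ^ (1/p) := by
    intro n
    induction n with
    | zero =>
      intro t x y
      have he : (∫⁻ s, Rfull μ K 0 t s * Λ s x y ^ p ∂μ)
          = ∫⁻ s in {s : I | s ≤ t}, lam t s ^ p * Λ s x y ^ p ∂μ := by
        rw [hsetint 0 t (fun s => Λ s x y ^ p)]; rfl
      rw [he, Function.iterate_one]
      exact hC1a t x y
    | succ n ih =>
      intro t x y
      have h1 : d t (Ψ^[n + 1 + 1] x) (Ψ^[n + 1 + 1] y)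
          ≤ (∫⁻ s in {s : I | s ≤ t},
              lam t s ^ p * Λ s (Ψ^[n+1] x) (Ψ^[n+1] y) ^ p ∂μ) ^ (1/p) := by
        have h := hC1a t (Ψ^[n+1] x) (Ψ^[n+1] y)
        rwa [← Function.iterate_succ_apply' Ψ (n+1) x,
          ← Function.iterate_succ_apply' Ψ (n+1) y] at h
      refine h1.trans (ENNReal.rpow_le_rpow ?_ (by positivity))
      have h2 : ∀ s : I, Λ s (Ψ^[n+1] x) (Ψ^[n+1] y) ^ p
          ≤ ∫⁻ u, Rfull μ K n s u * Λ u x y ^ p ∂μ :=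
        fun s => hpowp _ _ ((hC1b s _ _).trans (ih s x y))
      calc ∫⁻ s in {s : I | s ≤ t}, lam t s ^ p * Λ s (Ψ^[n+1] x) (Ψ^[n+1] y) ^ p ∂μ
          ≤ ∫⁻ s in {s : I | s ≤ t},
              lam t s ^ p * (∫⁻ u, Rfull μ K n s u * Λ u x y ^ p ∂μ) ∂μ :=
            lintegral_mono fun s => mul_le_mul_right (h2 s) _
        _ = ∫⁻ s, K t s * (∫⁻ u, Rfull μ K n s u * Λ u x y ^ p ∂μ) ∂μ := by
            rw [← lintegral_indicator (hsecL t)]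
            congr 1; funext s
            by_cases h : s ≤ t
            · rw [Set.indicator_of_mem (show s ∈ {s : I | s ≤ t} from h), hK1 t s h]
            · rw [Set.indicator_of_notMem (show s ∉ {s : I | s ≤ t} from h),
                hK0 t s h, zero_mul]
        _ = ∫⁻ s, ∫⁻ u, K t s * (Rfull μ K n s u * Λ u x y ^ p) ∂μ ∂μ := by
            congr 1; funext s
            have hm1 : Measurable fun u : I => Rfull μ K n s u * Λ u x y ^ p :=
              ((hRm n).comp (measurable_const.prodMk measurable_id)).mul (hΛp x y)
            rw [lintegral_const_mul _ hm1]
        _ = ∫⁻ u, ∫⁻ s, K t s * (Rfull μ K n s u * Λ u x y ^ p) ∂μ ∂μ := by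
            apply lintegral_lintegral_swap
            exact ((hKm.comp (measurable_const.prodMk measurable_fst)).mul
              (((hRm n).comp (measurable_fst.prodMk measurable_snd)).mul
                ((hΛp x y).comp measurable_snd))).aemeasurable
        _ = ∫⁻ u, (∫⁻ s, K t s * Rfull μ K n s u ∂μ) * Λ u x y ^ p ∂μ := by
            congr 1; funext u
            have hm2 : Measurable fun s : I => K t s * Rfull μ K n s u :=
              (hKm.comp (measurable_const.prodMk measurable_id)).mul
                ((hRm n).comp (measurable_id.prodMk measurable_const))
            rw [← lintegral_mul_const _ hm2]
            congr 1; funext s; ring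
        _ = ∫⁻ u, Rfull μ K (n + 1) t u * Λ u x y ^ p ∂μ := rfl
  -- the error terms
  set a : ℕ → I → ℝ≥0∞ := fun n t =>
    (∫⁻ s in {s : I | s ≤ t},
      res (· ≤ ·) μ lamp n t s * Λ s x₀ (Ψ x₀) ^ p ∂μ) ^ (1 / p) with hadef
  have hstep : ∀ (n : ℕ) (t : I), d t (Ψ^[n+1] x₀) (Ψ^[n+2] x₀) ≤ a n t := by
    intro n t
    have h := keyB n t x₀ (Ψ x₀)
    rw [hsetint n t] at h
    rwa [← Function.iterate_succ_apply Ψ (n+1) x₀] at h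
  have htel : ∀ (n k : ℕ) (t : I),
      d t (Ψ^[n+1] x₀) (Ψ^[n+1+k] x₀) ≤ ∑ i ∈ Finset.range k, a (n+i) t := by
    intro n k t
    induction k with
    | zero => simpa using le_of_eq (hC2refl t _)
    | succ k ih =>
      have e1 : n + 1 + k = n + k + 1 := by omega
      have e2 : n + 1 + (k + 1) = n + k + 2 := by omega
      calc d t (Ψ^[n+1] x₀) (Ψ^[n+1+(k+1)] x₀)
          ≤ d t (Ψ^[n+1] x₀) (Ψ^[n+1+k] x₀) + d t (Ψ^[n+1+k] x₀) (Ψ^[n+1+(k+1)] x₀) :=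
            hC2triangle t _ _ _
        _ ≤ (∑ i ∈ Finset.range k, a (n+i) t) + a (n+k) t := by
            refine add_le_add ih ?_
            rw [e1, e2]
            exact hstep (n+k) t
        _ = ∑ i ∈ Finset.range (k+1), a (n+i) t := (Finset.sum_range_succ _ k).symm
  have hbound : ∀ (n m : ℕ) (t : I), n + 1 ≤ m →
      d t (Ψ^[n+1] x₀) (Ψ^[m] x₀) ≤ ∑' i, a (n+i) t := by
    intro n m t h
    obtain ⟨k, rfl⟩ := Nat.exists_eq_add_of_le h
    exact (htel n k t).trans (ENNReal.sum_le_tsum (Finset.range k))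
  have hTtend : ∀ t : I, Tendsto (fun n : ℕ => ∑' i, a (n+i) t) atTop (nhds 0) := by
    intro t
    have h := ENNReal.tendsto_sum_nat_add (fun n => a n t) (hx₀ t).ne
    have he : (fun n : ℕ => ∑' i, a (n+i) t) = fun n : ℕ => ∑' i, a (i+n) t := by
      funext n; exact tsum_congr fun i => by rw [add_comm]
    rw [he]; exact h
  have hcauchy : ∀ t : I,
      Tendsto (fun n : ℕ => ⨆ m ∈ Set.Ici n, d t (Ψ^[n] x₀) (Ψ^[m] x₀)) atTop (nhds 0) := by
    intro t
    refine tendsto_of_tendsto_of_tendsto_of_le_of_le' tendsto_const_nhds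
      ((hTtend t).comp (tendsto_sub_atTop_nat 1))
      (Eventually.of_forall fun n => zero_le) ?_
    filter_upwards [eventually_ge_atTop 1] with n hn
    obtain ⟨k, rfl⟩ : ∃ k, n = k + 1 := ⟨n-1, (Nat.succ_pred_eq_of_pos hn).symm⟩
    simp only [Function.comp, Nat.add_sub_cancel]
    exact iSup₂_le fun m hm => hbound k m t hm
  obtain ⟨xhat, hconv⟩ := hcomplete (fun n => Ψ^[n] x₀) hcauchy
  have h1 : ∀ t : I, Tendsto (fun n : ℕ => d t (Ψ^[n+1] x₀) (Ψ xhat)) atTop (nhds 0) := by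
    intro t
    have h := hseqcont (fun n => Ψ^[n] x₀) xhat hconv t
    have he : (fun n : ℕ => d t (Ψ (Ψ^[n] x₀)) (Ψ xhat))
        = fun n : ℕ => d t (Ψ^[n+1] x₀) (Ψ xhat) := by
      funext n; rw [Function.iterate_succ_apply']
    rwa [he] at h
  have hfix : Ψ xhat = xhat := by
    have h2 : ∀ t : I, d t (Ψ xhat) xhat = 0 := by
      intro t
      have ha : Tendsto (fun n : ℕ => d t (Ψ xhat) (Ψ^[n+1] x₀)) atTop (nhds 0) := by
        have he : (fun n : ℕ => d t (Ψ xhat) (Ψ^[n+1] x₀))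
            = fun n : ℕ => d t (Ψ^[n+1] x₀) (Ψ xhat) := funext fun n => hC2symm t _ _
        rw [he]; exact h1 t
      have hb : Tendsto (fun n : ℕ => d t (Ψ^[n+1] x₀) xhat) atTop (nhds 0) :=
        (hconv t).comp (tendsto_add_atTop_nat 1)
      have h3 : Tendsto (fun n : ℕ =>
          d t (Ψ xhat) (Ψ^[n+1] x₀) + d t (Ψ^[n+1] x₀) xhat) atTop (nhds 0) := by
        simpa using ha.add hb
      refine le_antisymm (ge_of_tendsto' h3 fun n => hC2triangle t (Ψ xhat) (Ψ^[n+1] x₀) xhat)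
        (zero_le)
    exact (hd0 (Ψ xhat) xhat).mpr h2
  refine ⟨xhat, hfix, hconv, ?_, ?_⟩
  · -- error estimate
    intro n t
    have h3 : Tendsto (fun m : ℕ => (∑' i, a (n+i) t) + d t (Ψ^[m] x₀) xhat) atTop
        (nhds (∑' i, a (n+i) t)) := by
      simpa using (tendsto_const_nhds : Tendsto (fun _ : ℕ => ∑' i, a (n+i) t) atTop _).add (hconv t)
    refine ge_of_tendsto h3 ?_
    filter_upwards [eventually_ge_atTop (n+1)] with m hm
    exact (hC2triangle t _ (Ψ^[m] x₀) _).trans (add_le_add_left (hbound n m t hm) _)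
  · -- uniqueness
    intro H y hy
    have hdzero : ∀ t : I, d t y xhat = 0 := by
      intro t
      have hk : ∀ n : ℕ, d t y xhat ^ p
          ≤ ∫⁻ s in {s : I | s ≤ t}, res (· ≤ ·) μ lamp n t s * Λ s y xhat ^ p ∂μ := by
        intro n
        have h := keyB n t y xhat
        rw [Function.iterate_fixed hy, Function.iterate_fixed hfix] at h
        have h' := hpowp _ _ h
        rwa [hsetint n t] at h'
      have hH := H t y xhat
      rw [hy, hfix] at hH
      have h0 : d t y xhat ^ p = 0 :=
        le_antisymm (ge_of_tendsto' hH hk) (zero_le)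
      rcases ENNReal.rpow_eq_zero_iff.mp h0 with ⟨h, _⟩ | ⟨_, hneg⟩
      · exact h
      · exact absurd hneg (not_lt.mpr hp0.le)
    exact (hd0 y xhat).mpr hdzero
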